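/- For every integer n ≥ 3, M(n,2,3,2,3) ≤ C(⌈n/2⌉, 2) · ⌊n/2⌋; that is, there is a 2-coloring of the edges of K^3_n in which every monochromatic 2-tight component has at most C(⌈n/2⌉, 2) · ⌊n/2⌋ edges. -/

import Mathlib

open Finset

/-- The `s`-shadow of a hypergraph `H`: all `s`-element vertex sets contained in
some edge of `H`. -/
def hShadow {V : Type*} [DecidableEq V] (s : ℕ) (H : Finset (Finset V)) :
    Finset (Finset V) :=
  H.biUnion fun e => e.powersetCard s

/-- One step of `t`-tight connectivity: both `a` and `b` are edges of `H` and they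
share at least `t` vertices. -/
def TightStep {V : Type*} [DecidableEq V] (t : ℕ) (H : Finset (Finset V))
    (a b : Finset V) : Prop :=
  a ∈ H ∧ b ∈ H ∧ t ≤ (a ∩ b).card

/-- Two edges lie in the same `t`-tight component iff they are joined by a chain of
edges, consecutive ones sharing at least `t` vertices. -/
def TightConn {V : Type*} [DecidableEq V] (t : ℕ) (H : Finset (Finset V)) :
    Finset V → Finset V → Prop :=
  Relation.ReflTransGen (TightStep t H)

open scoped Classical in
/-- The `t`-tight component of the edge `e` in the hypergraph `H`. -/
noncomputable def tightComponent {V : Type*} [DecidableEq V] (t : ℕ)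
    (H : Finset (Finset V)) (e : Finset V) : Finset (Finset V) :=
  H.filter fun f => TightConn t H e f

/-- The `k`-uniform hypergraph `H i` of edges of `K^k_n` having color `i` under the
coloring `c`. -/
def colorClass (n r k : ℕ) (c : Finset (Fin n) → Fin r) (i : Fin r) :
    Finset (Finset (Fin n)) :=
  (Finset.univ.powersetCard k).filter fun e => c e = i

/-- `M(n,r,k,t,s;c)`: the largest number of vertex `s`-sets contained in the edges of
a monochromatic `t`-tight component of the `r`-coloring `c` of `K^k_n`. -/
noncomputable def Mcol (n r k t s : ℕ) (c : Finset (Fin n) → Fin r) : ℕ :=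
  Finset.univ.sup fun i : Fin r =>
    (colorClass n r k c i).sup fun e =>
      (hShadow s (tightComponent t (colorClass n r k c i) e)).card

/-- `M(n,r,k,t,s)`: the minimum of `M(n,r,k,t,s;c)` over all `r`-colorings `c` of
`K^k_n`. -/
noncomputable def Mmin (n r k t s : ℕ) : ℕ :=
  sInf {m | ∃ c : Finset (Fin n) → Fin r, Mcol n r k t s c = m}

section Aux


lemma aux_near {n : ℕ} (A f g : Finset (Fin n)) (hf : f.card = 3) (hfg : 2 ≤ (f ∩ g).card) :
    (f ∩ A).card ≤ (g ∩ A).card + 1 := by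
  have h0 : (f ∩ g).card + (f \ g).card = f.card := Finset.card_inter_add_card_sdiff f g
  have hle : (f ∩ g).card ≤ f.card := card_le_card inter_subset_left
  have h1 : ((f ∩ A) ∩ g).card ≤ (g ∩ A).card := by
    apply card_le_card; intro x hx; simp only [mem_inter] at *; tauto
  have h2 : ((f ∩ A) \ g).card ≤ (f \ g).card := by
    apply card_le_card; intro x hx; simp only [mem_sdiff, mem_inter] at *; tauto
  have h3 : ((f ∩ A) ∩ g).card + ((f ∩ A) \ g).card = (f ∩ A).card :=
    Finset.card_inter_add_card_sdiff _ _
  omega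

lemma aux_arith (a b j : ℕ) (hba : b ≤ a) (hab : a ≤ b + 1) (hb : 1 ≤ b) (hj : j ≤ 3) :
    a.choose j * b.choose (3 - j) ≤ a.choose 2 * b := by
  have c3a : a.choose 3 * 3 = a.choose 2 * (a - 2) := Nat.choose_succ_right_eq a 2
  have c3b : b.choose 3 * 3 = b.choose 2 * (b - 2) := Nat.choose_succ_right_eq b 2
  have c2a : a.choose 2 * 2 = a.choose 1 * (a - 1) := Nat.choose_succ_right_eq a 1
  have c2b : b.choose 2 * 2 = b.choose 1 * (b - 1) := Nat.choose_succ_right_eq b 1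
  have mono2 : b.choose 2 ≤ a.choose 2 := Nat.choose_le_choose 2 hba
  interval_cases j
  · -- 1 * b.choose 3 ≤ a.choose 2 * b
    simp only [Nat.choose_zero_right, one_mul, Nat.sub_zero]
    have h1 : b.choose 3 ≤ b.choose 3 * 3 := Nat.le_mul_of_pos_right _ (by norm_num)
    have h2 : b.choose 2 * (b - 2) ≤ a.choose 2 * b :=
      Nat.mul_le_mul mono2 (Nat.sub_le b 2)
    omega
  · -- a * b.choose 2 ≤ a.choose 2 * b
    simp only [Nat.choose_one_right]
    show a * b.choose 2 ≤ a.choose 2 * b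
    have : (a * b.choose 2) * 2 ≤ (a.choose 2 * b) * 2 := by
      have e1 : (a * b.choose 2) * 2 = a * (b * (b - 1)) := by
        rw [mul_assoc, c2b, Nat.choose_one_right]
      have e2 : (a.choose 2 * b) * 2 = a * (a - 1) * b := by
        rw [mul_right_comm, c2a, Nat.choose_one_right]
      rw [e1, e2]
      calc a * (b * (b - 1)) = a * b * (b - 1) := by ring
        _ ≤ a * b * (a - 1) := Nat.mul_le_mul_left _ (by omega)
        _ = a * (a - 1) * b := by ring
    omega
  · simp [Nat.choose_one_right]
  · -- a.choose 3 * 1 ≤ a.choose 2 * b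
    simp only [Nat.sub_self, Nat.choose_zero_right, mul_one]
    have h : a.choose 3 * 3 ≤ (a.choose 2 * b) * 3 := by
      rw [c3a, mul_assoc]
      exact Nat.mul_le_mul_left _ (by omega)
    omega

end Aux

/-- For every `n ≥ 3`, `M(n,2,3,2,3) ≤ C(⌈n/2⌉,2) * ⌊n/2⌋`: there is a 2-coloring
of `K^3_n` in which every monochromatic 2-tight component has at most
`C(⌈n/2⌉,2) * ⌊n/2⌋` edges. -/
theorem statement17 (n : ℕ) (hn : 3 ≤ n) :
    Mmin n 2 3 2 3 ≤ ((n + 1) / 2).choose 2 * (n / 2) := by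
  classical
  set a := (n + 1) / 2 with ha
  set b := n / 2 with hb
  obtain ⟨A, -, hA⟩ := Finset.exists_subset_card_eq
    (show a ≤ (univ : Finset (Fin n)).card by simp only [card_univ, Fintype.card_fin]; omega)
  set col : Finset (Fin n) → Fin 2 := fun e => if Even ((e ∩ A).card) then 0 else 1 with hcoldef
  have hcolparity : ∀ f g : Finset (Fin n), col f = col g →
      (Even ((f ∩ A).card) ↔ Even ((g ∩ A).card)) := by
    intro f g h
    by_cases hf : Even ((f ∩ A).card) <;> by_cases hg : Even ((g ∩ A).card)
    · exact ⟨fun _ => hg, fun _ => hf⟩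
    · exfalso; simp only [hcoldef, if_pos hf, if_neg hg] at h; exact absurd h (by decide)
    · exfalso; simp only [hcoldef, if_pos hg, if_neg hf] at h; exact absurd h (by decide)
    · exact ⟨fun h' => absurd h' hf, fun h' => absurd h' hg⟩
  have key : Mcol n 2 3 2 3 col ≤ a.choose 2 * b := by
    apply Finset.sup_le
    intro i _
    apply Finset.sup_le
    intro e he
    set H := colorClass n 2 3 col i with hH
    have hH3 : ∀ f ∈ H, f.card = 3 := by
      intro f hf
      rw [hH, colorClass, mem_filter, Finset.mem_powersetCard] at hf
      exact hf.1.2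
    -- invariance of (f ∩ A).card along tight components
    have hstepinv : ∀ f g : Finset (Fin n), TightStep 2 H f g →
        (f ∩ A).card = (g ∩ A).card := by
      intro f g hs
      obtain ⟨hfH, hgH, hcard⟩ := hs
      have hf3 := hH3 f hfH
      have hg3 := hH3 g hgH
      have h1 := aux_near A f g hf3 hcard
      have h2 := aux_near A g f hg3 (by rwa [inter_comm])
      have hcf : col f = i := by
        rw [hH, colorClass, mem_filter] at hfH; exact hfH.2
      have hcg : col g = i := by
        rw [hH, colorClass, mem_filter] at hgH; exact hgH.2
      have hp := hcolparity f g (hcf.trans hcg.symm)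
      rw [Nat.even_iff, Nat.even_iff] at hp
      omega
    have hinv : ∀ f, TightConn 2 H e f → (f ∩ A).card = (e ∩ A).card := by
      intro f hf
      induction hf with
      | refl => rfl
      | tail _ hstep ih => rw [← ih, hstepinv _ _ hstep]
    -- shadow ⊆ component
    have hshadow : hShadow 3 (tightComponent 2 H e) ⊆ tightComponent 2 H e := by
      intro f hf
      rw [hShadow, mem_biUnion] at hf
      obtain ⟨g, hg, hfg⟩ := hf
      rw [Finset.mem_powersetCard] at hfg
      have hgH : g ∈ H := by
        rw [tightComponent, mem_filter] at hg; exact hg.1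
      have : f = g := Finset.eq_of_subset_of_card_le hfg.1 (by rw [hH3 g hgH, hfg.2])
      rwa [this]
    set j := (e ∩ A).card with hj
    have hcomp : tightComponent 2 H e ⊆
        (Finset.univ.powersetCard 3).filter (fun f => (f ∩ A).card = j) := by
      intro f hf
      rw [tightComponent, mem_filter] at hf
      rw [mem_filter]
      constructor
      · have hf1 : f ∈ H := hf.1
        rw [hH, colorClass, mem_filter] at hf1
        exact hf1.1
      · exact hinv f hf.2
    -- count the filter set
    have hcount : ((Finset.univ.powersetCard 3).filter
        (fun f : Finset (Fin n) => (f ∩ A).card = j)).card ≤ a.choose j * b.choose (3 - j) := by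
      have := Finset.card_le_card_of_injOn (fun f => (f ∩ A, f \ A))
        (s := (Finset.univ.powersetCard 3).filter (fun f : Finset (Fin n) => (f ∩ A).card = j))
        (t := A.powersetCard j ×ˢ Aᶜ.powersetCard (3 - j))
        (by
          intro f hf
          rw [Finset.mem_coe, mem_filter, Finset.mem_powersetCard] at hf
          obtain ⟨⟨-, hc3⟩, hcj⟩ := hf
          rw [Finset.mem_coe, Finset.mem_product, Finset.mem_powersetCard, Finset.mem_powersetCard]
          refine ⟨⟨inter_subset_right, hcj⟩, ?_, ?_⟩
          · intro x hx; rw [mem_sdiff] at hx; rw [mem_compl]; exact hx.2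
          · show (f \ A).card = 3 - j
            have := Finset.card_inter_add_card_sdiff f A
            omega)
        (by
          intro f hf g hg hfg
          simp only [Prod.mk.injEq] at hfg
          ext x
          constructor <;> intro hx
          · by_cases hxA : x ∈ A
            · have : x ∈ g ∩ A := by rw [← hfg.1]; exact mem_inter.2 ⟨hx, hxA⟩
              exact (mem_inter.1 this).1
            · have : x ∈ g \ A := by rw [← hfg.2]; exact mem_sdiff.2 ⟨hx, hxA⟩
              exact (mem_sdiff.1 this).1
          · by_cases hxA : x ∈ A
            · have : x ∈ f ∩ A := by rw [hfg.1]; exact mem_inter.2 ⟨hx, hxA⟩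
              exact (mem_inter.1 this).1
            · have : x ∈ f \ A := by rw [hfg.2]; exact mem_sdiff.2 ⟨hx, hxA⟩
              exact (mem_sdiff.1 this).1)
      rw [Finset.card_product, Finset.card_powersetCard, Finset.card_powersetCard,
        Finset.card_compl, Fintype.card_fin, hA] at this
      have hnb : n - a = b := by omega
      rwa [hnb] at this
    have hj3 : j ≤ 3 := by
      have he3 : e.card = 3 := by
        have he' : e ∈ H := he
        rw [hH, colorClass, mem_filter, Finset.mem_powersetCard] at he'
        exact he'.1.2
      calc j ≤ e.card := card_le_card inter_subset_left
        _ = 3 := he3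
    calc (hShadow 3 (tightComponent 2 H e)).card
        ≤ (tightComponent 2 H e).card := card_le_card hshadow
      _ ≤ _ := card_le_card hcomp
      _ ≤ a.choose j * b.choose (3 - j) := hcount
      _ ≤ a.choose 2 * b := aux_arith a b j (by omega) (by omega) (by omega) hj3
  calc Mmin n 2 3 2 3 ≤ Mcol n 2 3 2 3 col := Nat.sInf_le ⟨col, rfl⟩
    _ ≤ a.choose 2 * b := key
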